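/- The space of modular forms of weight 12 for SL₂(ℤ) whose q-expansions lie in q²·ℂ[[q]] (i.e. vanish to order ≥ 2 at infinity) is zero. -/

import Mathlib

open ModularForm SlashInvariantFormClass
open scoped CongruenceSubgroup

open UpperHalfPlane Complex Function Metric ModularGroup ModularFormClass
open scoped Modular MatrixGroups Real

local notation "𝕢" => Function.Periodic.qParam

namespace LevelOneWt12Aux

noncomputable def gg (f : ModularForm Γ(1) 12) : ℂ → ℂ :=
  dslope (dslope (cuspFunction 1 f) 0) 0

variable (f : ModularForm Γ(1) 12)

lemma gg_diff : DifferentiableOn ℂ (gg f) (Metric.ball 0 1) := by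
  have hF : DifferentiableOn ℂ (cuspFunction 1 f) (Metric.ball 0 1) := fun q hq =>
    (ModularFormClass.differentiableAt_cuspFunction (f := f) one_pos (by simp)
      (by simpa using mem_ball_zero_iff.mp hq)).differentiableWithinAt
  exact (differentiableOn_dslope (Metric.ball_mem_nhds 0 one_pos)).mpr
    ((differentiableOn_dslope (Metric.ball_mem_nhds 0 one_pos)).mpr hF)

lemma cusp_eq (h0 : cuspFunction 1 f 0 = 0) (h1 : deriv (cuspFunction 1 f) 0 = 0)
    {q : ℂ} (hq : q ≠ 0) : cuspFunction 1 f q = q ^ 2 * gg f q := by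
  have h2 : dslope (cuspFunction 1 f) 0 q = cuspFunction 1 f q / q := by
    rw [dslope_of_ne _ hq, slope_def_field, h0, sub_zero, sub_zero]
  have h3 : gg f q = cuspFunction 1 f q / q ^ 2 := by
    rw [gg, dslope_of_ne _ hq, slope_def_field, dslope_same, h1, sub_zero, sub_zero, h2,
      div_div, sq]
  rw [h3]
  field_simp

lemma H_invar (γ : SL(2, ℤ)) (τ : ℍ) :
    ‖f (γ • τ)‖ * (γ • τ).im ^ 6 = ‖f τ‖ * τ.im ^ 6 := by
  have hmem : γ ∈ Γ(1) := by rw [CongruenceSubgroup.Gamma_one_top]; exact Subgroup.mem_top γ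
  have h1 : f (γ • τ) = denom γ τ ^ (12 : ℤ) * f τ :=
    SlashInvariantForm.slash_action_eqn_SL'' f hmem τ
  have h2 : (γ • τ).im = τ.im / Complex.normSq (denom γ τ) :=
    ModularGroup.im_smul_eq_div_normSq γ τ
  have hd : ‖denom γ τ‖ ≠ 0 := norm_ne_zero_iff.mpr (denom_ne_zero γ τ)
  have hns : Complex.normSq (denom γ τ) = ‖denom γ τ‖ ^ 2 := by
    rw [Complex.normSq_eq_norm_sq]
  rw [h1, h2, norm_mul, norm_zpow, hns]
  have h12 : ‖denom γ τ‖ ^ (12 : ℤ) = ‖denom γ τ‖ ^ (12 : ℕ) := by norm_cast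
  rw [h12]
  have gen : ∀ D B I : ℝ, D ≠ 0 → D ^ (12:ℕ) * B * (I / D ^ 2) ^ 6 = B * I ^ 6 := by
    intro D B I hD
    field_simp
  exact gen _ _ _ hd

lemma key_ineq {y : ℝ} (hy : Real.sqrt 3 / 2 ≤ y) :
    Real.exp (-(4 * π) * y) * y ^ 6 < Real.exp (-(2 * π)) * (1 / 2) ^ 6 := by
  have h3 : (1 : ℝ) < Real.sqrt 3 := by
    nlinarith [Real.sq_sqrt (by norm_num : (0:ℝ) ≤ 3), Real.sqrt_nonneg (3:ℝ)]
  set t := 2 * y with ht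
  have ht1 : 1 < t := by
    have : Real.sqrt 3 ≤ t := by rw [ht]; linarith
    linarith
  have hπ : (3 : ℝ) < π := Real.pi_gt_three
  have hkey : t < Real.exp (π * (t - 1) / 3) := by
    have h := Real.add_one_le_exp (π * (t - 1) / 3)
    nlinarith
  have h6 : t ^ 6 < Real.exp (π * (t - 1) / 3) ^ 6 :=
    pow_lt_pow_left₀ hkey (by linarith) (by norm_num)
  have h7 : Real.exp (π * (t - 1) / 3) ^ 6 = Real.exp (2 * π * t - 2 * π) := by
    rw [← Real.exp_nat_mul]
    congr 1
    ring
  rw [h7] at h6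
  have h8 : Real.exp (-(2 * π) * t) * t ^ 6 <
      Real.exp (-(2 * π) * t) * Real.exp (2 * π * t - 2 * π) :=
    mul_lt_mul_of_pos_left h6 (Real.exp_pos _)
  have h9 : Real.exp (-(2 * π) * t) * Real.exp (2 * π * t - 2 * π) = Real.exp (-(2 * π)) := by
    rw [← Real.exp_add]; ring_nf
  have h10 : Real.exp (-(4 * π) * y) * y ^ 6 = Real.exp (-(2 * π) * t) * t ^ 6 * (1/2)^6 := by
    rw [ht]
    rw [show -(4 * π) * y = -(2 * π) * (2 * y) by ring]
    ring
  rw [h10]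
  rw [h9] at h8
  have hpos : (0:ℝ) < (1/2)^6 := by norm_num
  calc Real.exp (-(2 * π) * t) * t ^ 6 * (1/2)^6
      < Real.exp (-(2 * π)) * (1/2)^6 := by nlinarith
    _ = Real.exp (-(2 * π)) * (1 / 2) ^ 6 := rfl

end LevelOneWt12Aux

open LevelOneWt12Aux

/-- A modular form of weight 12 for `SL₂(ℤ)` whose `q`-expansion vanishes to order `≥ 2`
at infinity (i.e. `a₀ = a₁ = 0`) is zero. -/
theorem level_one_weight_twelve_order_two_vanishing (f : ModularForm Γ(1) 12)
    (h0 : cuspFunction 1 f 0 = 0)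
    (h1 : deriv (cuspFunction 1 f) 0 = 0) :
    f = 0 := by
  have hπ : (0:ℝ) < π := Real.pi_pos
  set r : ℝ := Real.exp (-π) with hrdef
  have hr0 : 0 < r := Real.exp_pos _
  have hr1 : r < 1 := by
    rw [hrdef]
    exact Real.exp_lt_one_iff.mpr (by linarith)
  -- maximizer of ‖gg f‖ on the sphere of radius r
  have hsub : Metric.sphere (0:ℂ) r ⊆ Metric.ball (0:ℂ) 1 := fun q hq => by
    rw [mem_sphere_zero_iff_norm] at hq
    rw [mem_ball_zero_iff, hq]
    exact hr1
  obtain ⟨q₀, hq₀s, hq₀max⟩ := (isCompact_sphere (0:ℂ) r).exists_isMaxOn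
    (NormedSpace.sphere_nonempty.mpr hr0.le)
    (((gg_diff f).continuousOn.norm).mono hsub)
  set C : ℝ := ‖gg f q₀‖ with hCdef
  have hC0 : 0 ≤ C := norm_nonneg _
  -- maximum modulus principle
  have hmax : ∀ q ∈ Metric.closedBall (0:ℂ) r, ‖gg f q‖ ≤ C := by
    intro q hq
    refine Complex.norm_le_of_forall_mem_frontier_norm_le (U := Metric.ball (0:ℂ) r) Metric.isBounded_ball ?_ ?_ ?_
    · refine DifferentiableOn.diffContOnCl ?_
      refine (gg_diff f).mono ?_
      rw [closure_ball (0:ℂ) hr0.ne']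
      exact fun x hx => lt_of_le_of_lt (mem_closedBall_zero_iff.mp hx) hr1 |> mem_ball_zero_iff.mpr
    · intro z hz
      rw [frontier_ball (0:ℂ) hr0.ne'] at hz
      exact hq₀max hz
    · rwa [closure_ball (0:ℂ) hr0.ne']
  -- the key bound for points with large imaginary part
  have hqnorm : ∀ τ : ℍ, ‖𝕢 1 (τ:ℂ)‖ = Real.exp (-(2*π) * τ.im) := by
    intro τ
    rw [Function.Periodic.norm_qParam]
    simp only [UpperHalfPlane.coe_im]
    congr 1
    ring
  have key : ∀ τ : ℍ, 1/2 ≤ τ.im → ‖f τ‖ ≤ C * Real.exp (-(4*π) * τ.im) := by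
    intro τ hτ
    have hqne : (𝕢 1 (τ:ℂ)) ≠ 0 := by
      rw [← norm_ne_zero_iff, hqnorm]
      exact (Real.exp_pos _).ne'
    have hmem : 𝕢 1 (τ:ℂ) ∈ Metric.closedBall (0:ℂ) r := by
      rw [mem_closedBall_zero_iff, hqnorm, hrdef]
      exact Real.exp_le_exp.mpr (by nlinarith)
    have heq : cuspFunction 1 f (𝕢 1 (τ:ℂ)) = f τ := by
      simpa using SlashInvariantFormClass.eq_cuspFunction (h := 1) (f := f) τ (by simp) one_ne_zero
    calc ‖f τ‖ = ‖cuspFunction 1 f (𝕢 1 (τ:ℂ))‖ := by rw [heq]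
      _ = ‖𝕢 1 (τ:ℂ)‖^2 * ‖gg f (𝕢 1 (τ:ℂ))‖ := by
          rw [cusp_eq f h0 h1 hqne, norm_mul, norm_pow]
      _ ≤ ‖𝕢 1 (τ:ℂ)‖^2 * C := by
          exact mul_le_mul_of_nonneg_left (hmax _ hmem) (by positivity)
      _ = C * Real.exp (-(4*π) * τ.im) := by
          rw [hqnorm, sq, ← Real.exp_add]
          ring_nf
  -- the point τ₀ on the horizontal line im = 1/2 mapping to q₀
  have hq₀n : ‖q₀‖ = r := by
    exact mem_sphere_zero_iff_norm.mp hq₀s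
  have hq₀ne : q₀ ≠ 0 := by
    intro h
    rw [h] at hq₀n
    simp at hq₀n
    exact hr0.ne' hq₀n.symm
  have him : (Function.Periodic.invQParam 1 q₀).im = 1/2 := by
    rw [Function.Periodic.im_invQParam, hq₀n, hrdef, Real.log_exp]
    field_simp
  set τ₀ : ℍ := ⟨Function.Periodic.invQParam 1 q₀, by rw [him]; norm_num⟩ with hτ₀def
  have hτ₀im : τ₀.im = 1/2 := him
  have hqτ₀ : 𝕢 1 (τ₀:ℂ) = q₀ := Function.Periodic.qParam_right_inv one_ne_zero hq₀ne
  have hfτ₀ : ‖f τ₀‖ = Real.exp (-(2*π)) * C := by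
    have heq : cuspFunction 1 f (𝕢 1 (τ₀:ℂ)) = f τ₀ := by
      simpa using SlashInvariantFormClass.eq_cuspFunction (h := 1) (f := f) τ₀ (by simp) one_ne_zero
    rw [← heq, hqτ₀, cusp_eq f h0 h1 hq₀ne, norm_mul, norm_pow]
    rw [show ‖q₀‖ = r from mem_sphere_zero_iff_norm.mp hq₀s, hrdef, sq, ← Real.exp_add]
    ring_nf
    rw [hCdef]
  -- move τ₀ into the fundamental domain
  obtain ⟨γ, hγ⟩ := ModularGroup.exists_smul_mem_fd τ₀
  set ξ := γ • τ₀ with hξdef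
  have hξpos : 0 < ξ.im := ξ.im_pos
  have hξim : Real.sqrt 3 / 2 ≤ ξ.im := by
    have h3 := ModularGroup.three_le_four_mul_im_sq_of_mem_fd hγ
    have hs : Real.sqrt 3 ≤ 2 * ξ.im := by
      have : Real.sqrt 3 = Real.sqrt 3 := rfl
      nlinarith [Real.sq_sqrt (by norm_num : (0:ℝ) ≤ 3), Real.sqrt_nonneg (3:ℝ)]
    linarith
  have h3gt1 : (1:ℝ) < Real.sqrt 3 := by
    nlinarith [Real.sq_sqrt (by norm_num : (0:ℝ) ≤ 3), Real.sqrt_nonneg (3:ℝ)]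
  have hHeq := H_invar f γ τ₀
  rw [← hξdef] at hHeq
  have hbound : ‖f ξ‖ ≤ C * Real.exp (-(4*π) * ξ.im) := key ξ (by linarith)
  have hlt := key_ineq hξim
  -- conclude C = 0
  have hC : C = 0 := by
    by_contra hne
    have hCpos : 0 < C := lt_of_le_of_ne hC0 (Ne.symm hne)
    have hchain : C * (Real.exp (-(2*π)) * (1/2)^6) ≤
        C * (Real.exp (-(4*π) * ξ.im) * ξ.im ^ 6) := by
      have e1 : C * (Real.exp (-(2*π)) * (1/2)^6) = ‖f τ₀‖ * τ₀.im ^ 6 := by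
        rw [hfτ₀, hτ₀im]; ring
      have e2 : ‖f τ₀‖ * τ₀.im ^ 6 = ‖f ξ‖ * ξ.im ^ 6 := hHeq.symm
      rw [e1, e2]
      have := mul_le_mul_of_nonneg_right hbound (by positivity : (0:ℝ) ≤ ξ.im ^ 6)
      calc ‖f ξ‖ * ξ.im ^ 6 ≤ C * Real.exp (-(4*π) * ξ.im) * ξ.im ^ 6 := this
        _ = C * (Real.exp (-(4*π) * ξ.im) * ξ.im ^ 6) := by ring
    nlinarith
  -- conclude f = 0
  ext τ
  obtain ⟨γ', hγ'⟩ := ModularGroup.exists_smul_mem_fd τ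
  have hmem' : γ' ∈ Γ(1) := by rw [CongruenceSubgroup.Gamma_one_top]; exact Subgroup.mem_top γ'
  have h1' : f (γ' • τ) = denom γ' τ ^ (12 : ℤ) * f τ :=
    SlashInvariantForm.slash_action_eqn_SL'' f hmem' τ
  have him' : 1/2 ≤ (γ' • τ).im := by
    have h3 := ModularGroup.three_le_four_mul_im_sq_of_mem_fd hγ'
    have hp := (γ' • τ).im_pos
    nlinarith
  have hz : ‖f (γ' • τ)‖ ≤ 0 := by
    have := key (γ' • τ) him'
    rw [hC, zero_mul] at this
    exact this
  have hz' : f (γ' • τ) = 0 := norm_le_zero_iff.mp hz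
  rw [hz'] at h1'
  have hd : denom γ' τ ^ (12 : ℤ) ≠ 0 := zpow_ne_zero _ (denom_ne_zero γ' τ)
  have : f τ = 0 := by
    rcases mul_eq_zero.mp h1'.symm with h | h
    · exact absurd h hd
    · exact h
  simpa using this
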